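/- arXiv:1201.4818 — 6 statements merged into one kernel-verified Lean document; each statement's English description precedes it below -/
import Mathlib

section
/- The point P = ((k-1)^{-1/2}, 0) satisfies F₄⁴(P) = P, and F₄^j(P) ≠ P for j = 1, 2, 3; in fact F₄^j(P) = R₄^j(P) for j = 1, 2, 3. -/
/-- The point `P = ((k-1)^{-1/2}, 0)` is periodic of minimal period 4 for `F₄`,
with `F₄^j(P) = R₄^j(P) ≠ P` for `j = 1, 2, 3`. -/
theorem szlenk_period_four_orbit (k : ℝ) (hk1 : 1 < k) (hk2 : k < 2 / Real.sqrt 3)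
    (F : ℝ × ℝ → ℝ × ℝ)
    (hF : ∀ p : ℝ × ℝ,
      F p = (-k * p.2 ^ 3 / (1 + p.1 ^ 2 + p.2 ^ 2),
              k * p.1 ^ 3 / (1 + p.1 ^ 2 + p.2 ^ 2)))
    (R : ℝ × ℝ → ℝ × ℝ) (hR : ∀ p : ℝ × ℝ, R p = (-p.2, p.1))
    (P : ℝ × ℝ) (hP : P = (1 / Real.sqrt (k - 1), 0)) :
    F^[4] P = P ∧
    (∀ j : ℕ, j = 1 ∨ j = 2 ∨ j = 3 → F^[j] P = R^[j] P ∧ F^[j] P ≠ P) := by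
  set a : ℝ := 1 / Real.sqrt (k - 1) with ha_def
  have hkm : (0:ℝ) < k - 1 := by linarith
  have hs : 0 < Real.sqrt (k - 1) := Real.sqrt_pos.mpr hkm
  have ha : 0 < a := by positivity
  have ha2 : a ^ 2 * (k - 1) = 1 := by
    rw [ha_def, div_pow, one_pow, Real.sq_sqrt hkm.le]
    field_simp
  have hden : (1 + a ^ 2 : ℝ) ≠ 0 := by positivity
  have key : k * a ^ 3 / (1 + a ^ 2) = a := by
    rw [div_eq_iff hden]; linear_combination a * ha2
  have h1 : F (a, 0) = (0, a) := by
    rw [hF]; simp only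
    refine Prod.ext ?_ ?_ <;> simp only []
    · norm_num
    · simpa using key
  have h2 : F (0, a) = (-a, 0) := by
    rw [hF]; simp only
    refine Prod.ext ?_ ?_ <;> simp only []
    · have : -k * a ^ 3 / (1 + 0 ^ 2 + a ^ 2) = -(k * a ^ 3 / (1 + a ^ 2)) := by
        ring_nf
      simpa [this, key]
    · norm_num
  have h3 : F (-a, 0) = (0, -a) := by
    rw [hF]; simp only
    refine Prod.ext ?_ ?_ <;> simp only []
    · norm_num
    · have : k * (-a) ^ 3 / (1 + (-a) ^ 2 + 0 ^ 2) = -(k * a ^ 3 / (1 + a ^ 2)) := by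
        ring_nf
      simpa [this, key]
  have h4 : F (0, -a) = (a, 0) := by
    rw [hF]; simp only
    refine Prod.ext ?_ ?_ <;> simp only []
    · have : -k * (-a) ^ 3 / (1 + 0 ^ 2 + (-a) ^ 2) = k * a ^ 3 / (1 + a ^ 2) := by
        ring_nf
      simpa [this, key]
    · norm_num
  have hP' : P = (a, 0) := hP
  have e1 : F^[1] P = (0, a) := by simp [hP', h1]
  have e2 : F^[2] P = (-a, 0) := by
    rw [show (2:ℕ) = 1 + 1 from rfl, Function.iterate_add_apply, e1,
      Function.iterate_one, h2]
  have e3 : F^[3] P = (0, -a) := by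
    rw [show (3:ℕ) = 1 + 2 from rfl, Function.iterate_add_apply, e2,
      Function.iterate_one, h3]
  have e4 : F^[4] P = (a, 0) := by
    rw [show (4:ℕ) = 1 + 3 from rfl, Function.iterate_add_apply, e3,
      Function.iterate_one, h4]
  have r1 : R^[1] P = (0, a) := by simp [hP', hR]
  have r2 : R^[2] P = (-a, 0) := by
    rw [show (2:ℕ) = 1 + 1 from rfl, Function.iterate_add_apply, r1,
      Function.iterate_one, hR]
  have r3 : R^[3] P = (0, -a) := by
    rw [show (3:ℕ) = 1 + 2 from rfl, Function.iterate_add_apply, r2,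
      Function.iterate_one, hR]
    norm_num
  refine ⟨by rw [e4, hP'], ?_⟩
  intro j hj
  rcases hj with rfl | rfl | rfl
  · refine ⟨by rw [e1, r1], ?_⟩
    rw [e1, hP']
    intro h
    have := congrArg Prod.snd h
    simp at this
    exact ha.ne' this
  · refine ⟨by rw [e2, r2], ?_⟩
    rw [e2, hP']
    intro h
    have := congrArg Prod.fst h
    simp at this
    linarith
  · refine ⟨by rw [e3, r3], ?_⟩
    rw [e3, hP']
    intro h
    have := congrArg Prod.snd h
    simp at this
    linarith
end

section
/- The map F₄ is injective on ℝ². -/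
lemma cube_inj : Function.Injective (fun a : ℝ => a ^ 3) :=
  (Odd.strictMono_pow (R := ℝ) ⟨1, by norm_num⟩).injective

/-- `F₄` is injective on `ℝ²`. -/
theorem szlenk_injective (k : ℝ) (hk1 : 1 < k) (hk2 : k < 2 / Real.sqrt 3)
    (F : ℝ × ℝ → ℝ × ℝ)
    (hF : ∀ p : ℝ × ℝ,
      F p = (-k * p.2 ^ 3 / (1 + p.1 ^ 2 + p.2 ^ 2),
              k * p.1 ^ 3 / (1 + p.1 ^ 2 + p.2 ^ 2))) :
    Function.Injective F := by
  intro p q h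
  rw [hF p, hF q, Prod.mk.injEq] at h
  obtain ⟨h1, h2⟩ := h
  set s₁ : ℝ := 1 + p.1 ^ 2 + p.2 ^ 2 with hs₁
  set s₂ : ℝ := 1 + q.1 ^ 2 + q.2 ^ 2 with hs₂
  have hs₁pos : 0 < s₁ := by positivity
  have hs₂pos : 0 < s₂ := by positivity
  have hk0 : k ≠ 0 := by linarith
  have hx : p.1 ^ 3 * s₂ = q.1 ^ 3 * s₁ := by
    field_simp at h2; nlinarith [h2]
  have hy : p.2 ^ 3 * s₂ = q.2 ^ 3 * s₁ := by
    field_simp at h1; nlinarith [h1]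
  -- cube root of s₂/s₁
  set c : ℝ := (s₂ / s₁) ^ ((1 : ℝ) / 3) with hc
  have hcpos : 0 < c := Real.rpow_pos_of_pos (by positivity) _
  have hc3 : c ^ 3 = s₂ / s₁ := by
    rw [hc, ← Real.rpow_natCast ((s₂ / s₁) ^ ((1:ℝ)/3)) 3, ← Real.rpow_mul (by positivity)]
    norm_num
  have hc3' : c ^ 3 * s₁ = s₂ := by
    rw [hc3]; field_simp
  have hq1 : q.1 = c * p.1 := by
    apply cube_inj
    show q.1 ^ 3 = (c * p.1) ^ 3
    have h : q.1 ^ 3 * s₁ = (c * p.1) ^ 3 * s₁ := by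
      linear_combination (-1 : ℝ) * hx - p.1 ^ 3 * hc3'
    exact mul_right_cancel₀ (ne_of_gt hs₁pos) h
  have hq2 : q.2 = c * p.2 := by
    apply cube_inj
    show q.2 ^ 3 = (c * p.2) ^ 3
    have h : q.2 ^ 3 * s₁ = (c * p.2) ^ 3 * s₁ := by
      linear_combination (-1 : ℝ) * hy - p.2 ^ 3 * hc3'
    exact mul_right_cancel₀ (ne_of_gt hs₁pos) h
  have hr : 0 ≤ p.1 ^ 2 + p.2 ^ 2 := by positivity
  have hs2' : s₂ = 1 + c ^ 2 * p.1 ^ 2 + c ^ 2 * p.2 ^ 2 := by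
    rw [hs₂, hq1, hq2]; ring
  have key : c ^ 3 * (1 + p.1 ^ 2 + p.2 ^ 2) = 1 + c ^ 2 * (p.1 ^ 2 + p.2 ^ 2) := by
    linear_combination hc3' + hs2' - c ^ 3 * hs₁
  have factored : (c - 1) * (c ^ 2 + c + 1 + (p.1 ^ 2 + p.2 ^ 2) * c ^ 2) = 0 := by
    linear_combination key
  have hc1 : c = 1 := by
    rcases mul_eq_zero.mp factored with h | h
    · linarith
    · nlinarith [sq_nonneg c, mul_nonneg hr (sq_nonneg c)]
  rw [hc1, one_mul] at hq1 hq2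
  exact (Prod.ext hq1 hq2).symm
end

section
/- The map F₄ is surjective onto ℝ², and hence (being continuous and injective) is a homeomorphism of ℝ². -/
noncomputable def rcbrt (t : ℝ) : ℝ := if 0 ≤ t then t ^ ((1:ℝ)/3) else -((-t) ^ ((1:ℝ)/3))

lemma rcbrt_cube (t : ℝ) : (rcbrt t) ^ 3 = t := by
  have key : ∀ u : ℝ, 0 ≤ u → (u ^ ((1:ℝ)/3)) ^ 3 = u := by
    intro u hu
    rw [← Real.rpow_natCast (u ^ ((1:ℝ)/3)) 3, ← Real.rpow_mul hu]
    norm_num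
  unfold rcbrt
  split_ifs with h
  · exact key t h
  · push_neg at h
    rw [neg_pow, key (-t) (by linarith)]
    ring

lemma cube_inj_s6 {x y : ℝ} (h : x ^ 3 = y ^ 3) : x = y :=
  (Odd.strictMono_pow (R := ℝ) ⟨1, by norm_num⟩).injective h

lemma root_unique {k A s t : ℝ} (hk : 0 < k) (hA : 0 ≤ A) (hs : 0 < s) (ht : 0 < t)
    (h1 : k * s ^ 3 = A * s ^ 2 + 1) (h2 : k * t ^ 3 = A * t ^ 2 + 1) : s = t := by
  by_contra hne
  have hst : t - s ≠ 0 := sub_ne_zero.2 (Ne.symm hne)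
  have e1 : k * (t ^ 2 + t * s + s ^ 2) * (t - s) = (A * (t + s)) * (t - s) := by
    linear_combination h2 - h1
  have e2 : k * (t ^ 2 + t * s + s ^ 2) = A * (t + s) := mul_right_cancel₀ hst e1
  have hAs : A < k * s := by nlinarith [mul_pos hs hs]
  have h3 : A * (t + s) < (k * s) * (t + s) :=
    mul_lt_mul_of_pos_right hAs (by linarith)
  nlinarith [mul_pos hk (mul_pos ht ht)]

lemma root_exists {k A : ℝ} (hk : 0 < k) (hA : 0 ≤ A) : ∃ s, 0 < s ∧ k * s ^ 3 = A * s ^ 2 + 1 := by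
  set M := max 1 ((A + 2) / k) with hM
  have hM1 : 1 ≤ M := le_max_left _ _
  have hM2 : A + 2 ≤ k * M := by
    rw [hM, ← div_le_iff₀' hk]; exact le_max_right _ _
  have hcont : ContinuousOn (fun s => k * s ^ 3 - A * s ^ 2 - 1) (Set.Icc 0 M) := by fun_prop
  have hfM : (1:ℝ) ≤ k * M ^ 3 - A * M ^ 2 - 1 := by nlinarith [sq_nonneg (M - 1)]
  have h0 : (0:ℝ) ∈ Set.Icc (k * 0 ^ 3 - A * 0 ^ 2 - 1) (k * M ^ 3 - A * M ^ 2 - 1) := by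
    constructor <;> [norm_num; linarith]
  obtain ⟨s, hsIcc, hs0⟩ := intermediate_value_Icc (by linarith : (0:ℝ) ≤ M) hcont h0
  simp only at hs0
  refine ⟨s, ?_, by linarith⟩
  rcases lt_or_eq_of_le hsIcc.1 with h | h
  · exact h
  · exfalso; rw [← h] at hs0; norm_num at hs0

lemma szlenk_inj_aux {k b na x y : ℝ} (hk : 0 < k)
    (hx : k * x ^ 3 = b * (1 + x ^ 2 + y ^ 2))
    (hy : k * y ^ 3 = na * (1 + x ^ 2 + y ^ 2)) :
    ∃ u : ℝ, 0 < u ∧ x = u * rcbrt b ∧ y = u * rcbrt na ∧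
      k * u ^ 3 = ((rcbrt b) ^ 2 + (rcbrt na) ^ 2) * u ^ 2 + 1 := by
  have hD : (0:ℝ) < 1 + x ^ 2 + y ^ 2 := by positivity
  obtain ⟨c, hc⟩ : ∃ c : ℝ, c = (1 + x ^ 2 + y ^ 2) / k := ⟨_, rfl⟩
  have hcpos : 0 < c := by rw [hc]; positivity
  obtain ⟨u, hud⟩ : ∃ u : ℝ, u = rcbrt c := ⟨_, rfl⟩
  have hu3 : u ^ 3 = c := by rw [hud]; exact rcbrt_cube c
  have hupos : 0 < u := by
    rcases le_or_gt u 0 with h | h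
    · have := Odd.pow_nonpos (n := 3) ⟨1, by norm_num⟩ h
      rw [hu3] at this; linarith
    · exact h
  have hkc : k * c = 1 + x ^ 2 + y ^ 2 := by rw [hc]; field_simp
  have hx3 : x ^ 3 = c * b := by
    apply mul_left_cancel₀ (ne_of_gt hk)
    rw [hx, ← hkc]; ring
  have hy3 : y ^ 3 = c * na := by
    apply mul_left_cancel₀ (ne_of_gt hk)
    rw [hy, ← hkc]; ring
  have hxeq : x = u * rcbrt b := by
    apply cube_inj_s6; rw [mul_pow, rcbrt_cube, hu3]; exact hx3
  have hyeq : y = u * rcbrt na := by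
    apply cube_inj_s6; rw [mul_pow, rcbrt_cube, hu3]; exact hy3
  refine ⟨u, hupos, hxeq, hyeq, ?_⟩
  have heq : k * u ^ 3 = 1 + x ^ 2 + y ^ 2 := by rw [hu3, hkc]
  rw [hxeq, hyeq] at heq
  linear_combination heq

/-- `F₄` is surjective, and is a homeomorphism of the plane. -/
theorem szlenk_surjective_homeomorph (k : ℝ) (hk1 : 1 < k)
    (hk2 : k < 2 / Real.sqrt 3)
    (F : ℝ × ℝ → ℝ × ℝ)
    (hF : ∀ p : ℝ × ℝ,
      F p = (-k * p.2 ^ 3 / (1 + p.1 ^ 2 + p.2 ^ 2),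
              k * p.1 ^ 3 / (1 + p.1 ^ 2 + p.2 ^ 2))) :
    Function.Surjective F ∧ ∃ e : ℝ × ℝ ≃ₜ ℝ × ℝ, ⇑e = F := by
  have hk0 : (0:ℝ) < k := by linarith
  -- Surjectivity
  have hsurj : Function.Surjective F := by
    rintro ⟨a, b⟩
    obtain ⟨s, hs, hroot⟩ := root_exists hk0
      (by positivity : (0:ℝ) ≤ (rcbrt b) ^ 2 + (rcbrt (-a)) ^ 2)
    refine ⟨(s * rcbrt b, s * rcbrt (-a)), ?_⟩
    rw [hF]
    have hD : 1 + (s * rcbrt b) ^ 2 + (s * rcbrt (-a)) ^ 2 = k * s ^ 3 := by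
      linear_combination -hroot
    have hks : k * s ^ 3 ≠ 0 := by positivity
    have hb : (s * rcbrt b) ^ 3 = s ^ 3 * b := by rw [mul_pow, rcbrt_cube]
    have ha : (s * rcbrt (-a)) ^ 3 = s ^ 3 * (-a) := by rw [mul_pow, rcbrt_cube]
    simp only [hD, ha, hb, Prod.mk.injEq]
    constructor <;> field_simp
  -- Injectivity
  have hinj : Function.Injective F := by
    rintro ⟨x, y⟩ ⟨x', y'⟩ hpp'
    rw [hF, hF] at hpp'
    simp only [Prod.mk.injEq] at hpp'
    obtain ⟨h1, h2⟩ := hpp'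
    have hD : (0:ℝ) < 1 + x ^ 2 + y ^ 2 := by positivity
    have hD' : (0:ℝ) < 1 + x' ^ 2 + y' ^ 2 := by positivity
    obtain ⟨b, hb⟩ : ∃ b : ℝ, b = k * x ^ 3 / (1 + x ^ 2 + y ^ 2) := ⟨_, rfl⟩
    obtain ⟨na, hna⟩ : ∃ na : ℝ, na = k * y ^ 3 / (1 + x ^ 2 + y ^ 2) := ⟨_, rfl⟩
    have hx : k * x ^ 3 = b * (1 + x ^ 2 + y ^ 2) := by rw [hb]; field_simp
    have hy : k * y ^ 3 = na * (1 + x ^ 2 + y ^ 2) := by rw [hna]; field_simp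
    have hx' : k * x' ^ 3 = b * (1 + x' ^ 2 + y' ^ 2) := by
      rw [hb, h2]; field_simp
    have hy' : k * y' ^ 3 = na * (1 + x' ^ 2 + y' ^ 2) := by
      have h1' : k * y ^ 3 / (1 + x ^ 2 + y ^ 2) = k * y' ^ 3 / (1 + x' ^ 2 + y' ^ 2) := by
        have := h1
        field_simp at this ⊢
        linarith [this]
      rw [hna, h1']; field_simp
    obtain ⟨u, hupos, hxeq, hyeq, heq⟩ := szlenk_inj_aux hk0 hx hy
    obtain ⟨u', hu'pos, hx'eq, hy'eq, heq'⟩ := szlenk_inj_aux hk0 hx' hy'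
    have huu : u = u' := root_unique hk0 (by positivity) hupos hu'pos heq heq'
    rw [Prod.mk.injEq]
    exact ⟨by rw [hxeq, hx'eq, huu], by rw [hyeq, hy'eq, huu]⟩
  -- Continuity
  have hFc : Continuous F := by
    have hFe : F = fun p : ℝ × ℝ =>
        (-k * p.2 ^ 3 / (1 + p.1 ^ 2 + p.2 ^ 2), k * p.1 ^ 3 / (1 + p.1 ^ 2 + p.2 ^ 2)) :=
      funext hF
    rw [hFe]
    have hD : ∀ p : ℝ × ℝ, (1 + p.1 ^ 2 + p.2 ^ 2) ≠ 0 := fun p => by positivity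
    exact Continuous.prodMk
      (Continuous.div (by fun_prop) (by fun_prop) hD)
      (Continuous.div (by fun_prop) (by fun_prop) hD)
  -- properness
  have key : ∀ ε : ℝ, ∃ r : ℝ, ∀ p : ℝ × ℝ, r < ‖p‖ → ε < ‖F p‖ := by
    intro ε
    refine ⟨max 1 (3 * ε), ?_⟩
    rintro ⟨x, y⟩ hp
    have hm : ‖((x : ℝ), (y : ℝ))‖ = max |x| |y| := rfl
    obtain ⟨m, hmd⟩ : ∃ m : ℝ, m = max |x| |y| := ⟨_, rfl⟩
    rw [hm, ← hmd] at hp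
    have hm1 : 1 < m := lt_of_le_of_lt (le_max_left _ _) hp
    have h3ε : 3 * ε < m := lt_of_le_of_lt (le_max_right _ _) hp
    have hm0 : 0 < m := by linarith
    have hD : (0:ℝ) < 1 + x ^ 2 + y ^ 2 := by positivity
    have hx2 : x ^ 2 ≤ m ^ 2 := by
      have h := le_max_left |x| |y|; rw [← hmd] at h
      nlinarith [abs_nonneg x, sq_abs x]
    have hy2 : y ^ 2 ≤ m ^ 2 := by
      have h := le_max_right |x| |y|; rw [← hmd] at h
      nlinarith [abs_nonneg y, sq_abs y]
    have hm2 : 1 ≤ m ^ 2 := by nlinarith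
    have hεlt : ε < k * m ^ 3 / (1 + x ^ 2 + y ^ 2) := by
      rw [lt_div_iff₀ hD]
      have e1 : ε * (1 + x ^ 2 + y ^ 2) < (m / 3) * (1 + x ^ 2 + y ^ 2) :=
        mul_lt_mul_of_pos_right (by linarith) hD
      have e2 : (m / 3) * (1 + x ^ 2 + y ^ 2) ≤ (m / 3) * (3 * m ^ 2) :=
        mul_le_mul_of_nonneg_left (by linarith) (by linarith)
      have e3 : (m / 3) * (3 * m ^ 2) ≤ k * m ^ 3 := by nlinarith [pow_pos hm0 3]
      linarith
    refine lt_of_lt_of_le hεlt ?_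
    have hnorm : ‖F (x, y)‖ =
        max |(-k * y ^ 3 / (1 + x ^ 2 + y ^ 2))| |(k * x ^ 3 / (1 + x ^ 2 + y ^ 2))| := by
      rw [hF]; rfl
    rw [hnorm]
    rcases le_total |y| |x| with hxy | hxy
    · refine le_trans ?_ (le_max_right _ _)
      rw [abs_div, abs_of_pos hD, abs_mul, abs_of_pos hk0, abs_pow]
      have : m = |x| := by rw [hmd]; exact max_eq_left hxy
      rw [this]
    · refine le_trans ?_ (le_max_left _ _)
      rw [abs_div, abs_of_pos hD, abs_mul, abs_neg, abs_of_pos hk0, abs_pow]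
      have : m = |y| := by rw [hmd]; exact max_eq_right hxy
      rw [this]
  have hprop : Filter.Tendsto F (Filter.cocompact _) (Filter.cocompact _) :=
    Filter.tendsto_cocompact_cocompact_of_norm key
  have hproper : IsProperMap F := isProperMap_iff_tendsto_cocompact.2 ⟨hFc, hprop⟩
  have hclosed : IsClosedMap F := hproper.isClosedMap
  refine ⟨hsurj, ?_⟩
  set e := Equiv.ofBijective F ⟨hinj, hsurj⟩ with he
  have hsymm : Continuous ⇑e.symm := by
    rw [continuous_iff_isClosed]
    intro C hC
    rw [← Equiv.image_eq_preimage_symm]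
    exact hclosed C hC
  exact ⟨⟨e, hFc, hsymm⟩, rfl⟩
end

section
/- F₄ maps the open first quadrant S₁ = {(x,y) : x > 0, y > 0} into the open second quadrant S₂ = {(x,y) : x < 0, y > 0}, and the image F₄(S₁) equals S₂. -/
/-- `F₄` maps the open first quadrant into the open second quadrant, and in
fact onto it. -/
theorem szlenk_maps_first_quadrant_onto_second (k : ℝ) (hk1 : 1 < k)
    (hk2 : k < 2 / Real.sqrt 3)
    (F : ℝ × ℝ → ℝ × ℝ)
    (hF : ∀ p : ℝ × ℝ,
      F p = (-k * p.2 ^ 3 / (1 + p.1 ^ 2 + p.2 ^ 2),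
              k * p.1 ^ 3 / (1 + p.1 ^ 2 + p.2 ^ 2))) :
    Set.MapsTo F {p : ℝ × ℝ | 0 < p.1 ∧ 0 < p.2} {p : ℝ × ℝ | p.1 < 0 ∧ 0 < p.2} ∧
    F '' {p : ℝ × ℝ | 0 < p.1 ∧ 0 < p.2} = {p : ℝ × ℝ | p.1 < 0 ∧ 0 < p.2} := by
  have hk0 : (0:ℝ) < k := lt_trans one_pos hk1
  have hmaps : Set.MapsTo F {p : ℝ × ℝ | 0 < p.1 ∧ 0 < p.2}
      {p : ℝ × ℝ | p.1 < 0 ∧ 0 < p.2} := by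
    rintro ⟨x, y⟩ ⟨hx, hy⟩
    simp only [Set.mem_setOf_eq] at hx hy ⊢
    rw [hF]
    have hr : (0:ℝ) < 1 + x ^ 2 + y ^ 2 := by positivity
    constructor
    · apply div_neg_of_neg_of_pos _ hr
      have : 0 < k * y ^ 3 := by positivity
      simpa using by linarith
    · positivity
  refine ⟨hmaps, Set.eq_of_subset_of_subset (Set.mapsTo_iff_image_subset.mp hmaps) ?_⟩
  rintro ⟨a, b⟩ ⟨ha, hb⟩
  simp only [Set.mem_setOf_eq] at ha hb
  set c : ℝ := ((-a) / b) ^ ((1:ℝ)/3) with hc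
  have hab : (0:ℝ) < (-a) / b := div_pos (by linarith) hb
  have hcpos : 0 < c := Real.rpow_pos_of_pos hab _
  have hc3 : c ^ 3 = (-a) / b := by
    rw [hc, ← Real.rpow_natCast (((-a) / b) ^ ((1:ℝ)/3)) 3, ← Real.rpow_mul hab.le]
    norm_num
  -- Solve the cubic k x³ - b(1+c²) x² - b = 0 on (0, M] by IVT
  set M : ℝ := max 1 (b * (1 + c ^ 2) + b) with hM
  have hM1 : (1:ℝ) ≤ M := le_max_left _ _
  have hM2 : b * (1 + c ^ 2) + b ≤ M := le_max_right _ _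
  have h0M : (0:ℝ) ≤ M := by linarith
  have hcont : ContinuousOn (fun x : ℝ => k * x ^ 3 - b * (1 + c ^ 2) * x ^ 2 - b)
      (Set.Icc 0 M) := by fun_prop
  have hmem : (0:ℝ) ∈ Set.Icc (k * 0 ^ 3 - b * (1 + c ^ 2) * 0 ^ 2 - b)
      (k * M ^ 3 - b * (1 + c ^ 2) * M ^ 2 - b) := by
    have hMsq : (1:ℝ) ≤ M ^ 2 := by nlinarith
    have h3 : (b * (1 + c ^ 2) + b) * M ^ 2 ≤ M * M ^ 2 :=
      mul_le_mul_of_nonneg_right hM2 (sq_nonneg M)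
    have h4 : b * 1 ≤ b * M ^ 2 := mul_le_mul_of_nonneg_left hMsq hb.le
    constructor
    · nlinarith
    · nlinarith [pow_nonneg h0M 3]
  obtain ⟨x, hxIcc, hgx⟩ := intermediate_value_Icc h0M hcont hmem
  simp only at hgx
  have hxpos : 0 < x := by
    rcases lt_or_eq_of_le hxIcc.1 with h | h
    · exact h
    · exfalso; rw [← h] at hgx; simp at hgx; linarith
  refine ⟨(x, c * x), ⟨hxpos, mul_pos hcpos hxpos⟩, ?_⟩
  have hr : (0:ℝ) < 1 + x ^ 2 + (c * x) ^ 2 := by positivity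
  have hkx : k * x ^ 3 = b * (1 + x ^ 2 + (c * x) ^ 2) := by nlinarith [hgx]
  rw [hF]
  simp only
  have h2 : k * x ^ 3 / (1 + x ^ 2 + (c * x) ^ 2) = b := by
    rw [hkx, mul_div_assoc, div_self hr.ne', mul_one]
  have h1 : -k * (c * x) ^ 3 / (1 + x ^ 2 + (c * x) ^ 2) = a := by
    have e : -k * (c * x) ^ 3 / (1 + x ^ 2 + (c * x) ^ 2)
        = -(c ^ 3) * (k * x ^ 3 / (1 + x ^ 2 + (c * x) ^ 2)) := by
      ring
    rw [e, h2, hc3]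
    field_simp
  rw [Prod.mk.injEq]
  exact ⟨h1, h2⟩
end

section
/- For the astroid curve γ(θ) = (k/2)(-sin³θ, cos³θ), the determinant of the 2×2 matrix with rows γ(θ) and γ'(θ) equals (3k²/4) sin²θ cos²θ; in particular it is strictly positive for θ ∈ (0, π/2), so the astroid arc is transverse to each line ray through the origin at those points. -/
open Real

lemma pair_li_of_det {v w : ℝ × ℝ} (h : v.1 * w.2 - v.2 * w.1 ≠ 0) :
    LinearIndependent ℝ ![v, w] := by
  rw [LinearIndependent.pair_iff]
  intro s t hst
  have h1 : s * v.1 + t * w.1 = 0 := congrArg Prod.fst hst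
  have h2 : s * v.2 + t * w.2 = 0 := congrArg Prod.snd hst
  have hs0 : s * (v.1 * w.2 - v.2 * w.1) = 0 := by linear_combination w.2 * h1 - w.1 * h2
  have ht0 : t * (v.1 * w.2 - v.2 * w.1) = 0 := by linear_combination v.1 * h2 - v.2 * h1
  exact ⟨by rcases mul_eq_zero.mp hs0 with h'|h' <;> tauto,
         by rcases mul_eq_zero.mp ht0 with h'|h' <;> tauto⟩

/-- For the astroid `γ(θ) = (k/2)(-sin³θ, cos³θ)`, the determinant of the matrix
with rows `γ(θ)` and `γ'(θ)` equals `(3k²/4) sin²θ cos²θ`; it is positive on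
`(0, π/2)`, where `γ(θ)` and `γ'(θ)` are linearly independent. -/
theorem astroid_transverse_to_rays (k : ℝ) (hk : 0 < k)
    (γ : ℝ → ℝ × ℝ)
    (hγ : ∀ θ : ℝ, γ θ = (k / 2 * (-(sin θ) ^ 3), k / 2 * (cos θ) ^ 3))
    (γ' : ℝ → ℝ × ℝ)
    (hγ' : ∀ θ : ℝ, γ' θ = (deriv (fun t => k / 2 * (-(sin t) ^ 3)) θ,
                             deriv (fun t => k / 2 * (cos t) ^ 3) θ)) :
    (∀ θ : ℝ, (γ θ).1 * (γ' θ).2 - (γ θ).2 * (γ' θ).1 =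
      3 * k ^ 2 / 4 * (sin θ) ^ 2 * (cos θ) ^ 2) ∧
    (∀ θ ∈ Set.Ioo 0 (π / 2),
      0 < (γ θ).1 * (γ' θ).2 - (γ θ).2 * (γ' θ).1 ∧
      LinearIndependent ℝ ![γ θ, γ' θ]) := by
  have hd1 : ∀ θ : ℝ, deriv (fun t => k / 2 * (-(sin t) ^ 3)) θ
      = k / 2 * (-(3 * sin θ ^ 2 * cos θ)) := by
    intro θ
    have : HasDerivAt (fun t => k / 2 * (-(sin t) ^ 3))
        (k / 2 * (-(3 * sin θ ^ 2 * cos θ))) θ := by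
      have h := ((Real.hasDerivAt_sin θ).pow 3).neg.const_mul (k / 2)
      exact h.congr_deriv (by norm_num)
    exact this.deriv
  have hd2 : ∀ θ : ℝ, deriv (fun t => k / 2 * (cos t) ^ 3) θ
      = k / 2 * (3 * cos θ ^ 2 * (-sin θ)) := by
    intro θ
    have : HasDerivAt (fun t => k / 2 * (cos t) ^ 3)
        (k / 2 * (3 * cos θ ^ 2 * (-sin θ))) θ := by
      have h := ((Real.hasDerivAt_cos θ).pow 3).const_mul (k / 2)
      exact h.congr_deriv (by norm_num)
    exact this.deriv
  have key : ∀ θ : ℝ, (γ θ).1 * (γ' θ).2 - (γ θ).2 * (γ' θ).1 =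
      3 * k ^ 2 / 4 * (sin θ) ^ 2 * (cos θ) ^ 2 := by
    intro θ
    rw [hγ, hγ']
    simp only [hd1, hd2]
    have hs := sin_sq_add_cos_sq θ
    linear_combination (3 * k ^ 2 / 4 * (sin θ) ^ 2 * (cos θ) ^ 2) * hs
  refine ⟨key, fun θ hθ => ?_⟩
  have hs : 0 < sin θ := sin_pos_of_pos_of_lt_pi hθ.1 (hθ.2.trans (by linarith [pi_pos]))
  have hc : 0 < cos θ := cos_pos_of_mem_Ioo ⟨by linarith [hθ.1, pi_pos], hθ.2⟩
  have hpos : 0 < (γ θ).1 * (γ' θ).2 - (γ θ).2 * (γ' θ).1 := by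
    rw [key]; positivity
  exact ⟨hpos, pair_li_of_det (ne_of_gt hpos)⟩
end

section
/- Let g(x,y) = F₄(x,y) + β(-y, x) with β > 0. Then |g(x,y)| → ∞ as |(x,y)| → ∞; more precisely, in polar coordinates, |g(r,θ)|² ≥ k r²/16 + β² r² + β k r²/2 for all r > 1. -/
open Real Filter

set_option maxHeartbeats 1000000

/-- For `g = F₄ + β·(-y,x)` with `β > 0`, `|g(x,y)| → ∞` as `|(x,y)| → ∞`;
more precisely, in polar coordinates,
`|g(r,θ)|² ≥ k r²/16 + β² r² + β k r²/2` for all `r > 1`. -/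
theorem szlenk_perturbed_proper (k β : ℝ) (hk1 : 1 < k)
    (hk2 : k < 2 / Real.sqrt 3) (hβ : 0 < β)
    (F : ℝ × ℝ → ℝ × ℝ)
    (hF : ∀ p : ℝ × ℝ,
      F p = (-k * p.2 ^ 3 / (1 + p.1 ^ 2 + p.2 ^ 2),
              k * p.1 ^ 3 / (1 + p.1 ^ 2 + p.2 ^ 2)))
    (g : ℝ × ℝ → ℝ × ℝ)
    (hg : ∀ p : ℝ × ℝ, g p = ((F p).1 + β * (-p.2), (F p).2 + β * p.1)) :
    Tendsto (fun p : ℝ × ℝ => Real.sqrt ((g p).1 ^ 2 + (g p).2 ^ 2))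
      (Filter.cocompact (ℝ × ℝ)) Filter.atTop ∧
    (∀ r θ : ℝ, 1 < r →
      k * r ^ 2 / 16 + β ^ 2 * r ^ 2 + β * k * r ^ 2 / 2 ≤
        (g (r * cos θ, r * sin θ)).1 ^ 2 + (g (r * cos θ, r * sin θ)).2 ^ 2) := by
  have hk0 : (0:ℝ) < k := lt_trans one_pos hk1
  constructor
  · -- tendsto part
    have hlow : ∀ p : ℝ × ℝ, β * ‖p‖ ≤ Real.sqrt ((g p).1 ^ 2 + (g p).2 ^ 2) := by
      rintro ⟨x, y⟩
      have hD : (0:ℝ) < 1 + x ^ 2 + y ^ 2 := by positivity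
      have h1 : β ^ 2 * (x ^ 2 + y ^ 2) ≤ (g (x, y)).1 ^ 2 + (g (x, y)).2 ^ 2 := by
        simp only [hg, hF]
        have e : (-k * y ^ 3 / (1 + x ^ 2 + y ^ 2) + β * (-y)) ^ 2 +
            (k * x ^ 3 / (1 + x ^ 2 + y ^ 2) + β * x) ^ 2 =
            (k * y ^ 3 / (1 + x ^ 2 + y ^ 2)) ^ 2 +
            2 * β * k * (y ^ 4 / (1 + x ^ 2 + y ^ 2)) + β ^ 2 * y ^ 2 +
            (k * x ^ 3 / (1 + x ^ 2 + y ^ 2)) ^ 2 +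
            2 * β * k * (x ^ 4 / (1 + x ^ 2 + y ^ 2)) + β ^ 2 * x ^ 2 := by
          field_simp
          ring
        rw [e]
        have t1 : (0:ℝ) ≤ (k * y ^ 3 / (1 + x ^ 2 + y ^ 2)) ^ 2 := sq_nonneg _
        have t2 : (0:ℝ) ≤ 2 * β * k * (y ^ 4 / (1 + x ^ 2 + y ^ 2)) := by positivity
        have t3 : (0:ℝ) ≤ (k * x ^ 3 / (1 + x ^ 2 + y ^ 2)) ^ 2 := sq_nonneg _
        have t4 : (0:ℝ) ≤ 2 * β * k * (x ^ 4 / (1 + x ^ 2 + y ^ 2)) := by positivity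
        nlinarith
      have hnorm : ‖((x : ℝ), (y : ℝ))‖ ≤ Real.sqrt (x ^ 2 + y ^ 2) := by
        rw [Prod.norm_def]
        apply max_le
        · rw [Real.norm_eq_abs, ← Real.sqrt_sq_eq_abs]
          exact Real.sqrt_le_sqrt (by nlinarith [sq_nonneg y])
        · rw [Real.norm_eq_abs, ← Real.sqrt_sq_eq_abs]
          exact Real.sqrt_le_sqrt (by nlinarith [sq_nonneg x])
      calc β * ‖((x : ℝ), (y : ℝ))‖ ≤ β * Real.sqrt (x ^ 2 + y ^ 2) := by
            exact mul_le_mul_of_nonneg_left hnorm hβ.le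
        _ = Real.sqrt (β ^ 2 * (x ^ 2 + y ^ 2)) := by
            rw [Real.sqrt_mul (sq_nonneg β), Real.sqrt_sq hβ.le]
        _ ≤ Real.sqrt ((g (x, y)).1 ^ 2 + (g (x, y)).2 ^ 2) := Real.sqrt_le_sqrt h1
    have h0 : Tendsto (fun p : ℝ × ℝ => β * ‖p‖) (cocompact (ℝ × ℝ)) atTop :=
      (tendsto_norm_cocompact_atTop).const_mul_atTop hβ
    exact tendsto_atTop_mono hlow h0
  · intro r θ hr
    have hr0 : (0:ℝ) < r := lt_trans one_pos hr
    simp only [hg, hF]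
    set c := Real.cos θ with hc
    set s := Real.sin θ with hs
    have hcs : c ^ 2 + s ^ 2 = 1 := by
      rw [hc, hs]; exact Real.cos_sq_add_sin_sq θ
    have hD2 : 1 + (r * c) ^ 2 + (r * s) ^ 2 = 1 + r ^ 2 := by
      have : (r * c) ^ 2 + (r * s) ^ 2 = r ^ 2 * (c ^ 2 + s ^ 2) := by ring
      rw [add_assoc, this, hcs, mul_one]
    rw [hD2]
    have hDpos : (0:ℝ) < 1 + r ^ 2 := by positivity
    set a := k * r ^ 3 / (1 + r ^ 2) with ha
    have hapos : 0 < a := by positivity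
    have e : (-k * (r * s) ^ 3 / (1 + r ^ 2) + β * -(r * s)) ^ 2 +
        (k * (r * c) ^ 3 / (1 + r ^ 2) + β * (r * c)) ^ 2 =
        a ^ 2 * (c ^ 6 + s ^ 6) + 2 * a * β * r * (c ^ 4 + s ^ 4) +
        β ^ 2 * r ^ 2 * (c ^ 2 + s ^ 2) := by
      rw [ha]
      field_simp
      ring
    rw [e, hcs, mul_one]
    have h4 : (1:ℝ)/2 ≤ c ^ 4 + s ^ 4 := by nlinarith [sq_nonneg (c ^ 2 - s ^ 2)]
    have h6 : (1:ℝ)/4 ≤ c ^ 6 + s ^ 6 := by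
      nlinarith [sq_nonneg (c ^ 2 - s ^ 2), sq_nonneg (c * s)]
    have hA : k * r ^ 2 / 16 ≤ a ^ 2 * (c ^ 6 + s ^ 6) := by
      have h1 : k * r ^ 2 / 16 ≤ a ^ 2 / 4 := by
        rw [ha, div_pow, div_div, div_le_div_iff₀ (by norm_num) (by positivity)]
        have hfac : (1 + r ^ 2) ^ 2 ≤ 4 * k * r ^ 4 := by
          have h1r : (0:ℝ) ≤ r ^ 2 - 1 := by nlinarith
          nlinarith [mul_nonneg (sub_nonneg.2 hk1.le) (pow_nonneg hr0.le 4),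
            mul_nonneg (by positivity : (0:ℝ) ≤ 3 * r ^ 2 + 1) h1r]
        calc k * r ^ 2 * ((1 + r ^ 2) ^ 2 * 4) ≤ k * r ^ 2 * (4 * k * r ^ 4 * 4) := by
              have hkr : (0:ℝ) ≤ k * r ^ 2 := by positivity
              have := mul_le_mul_of_nonneg_left (by linarith : (1 + r ^ 2) ^ 2 * 4 ≤ 4 * k * r ^ 4 * 4) hkr
              linarith
          _ = (k * r ^ 3) ^ 2 * 16 := by ring
      nlinarith [sq_nonneg a, h6, h1]
    have hB : β * k * r ^ 2 / 2 ≤ 2 * a * β * r * (c ^ 4 + s ^ 4) := by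
      have h1 : β * k * r ^ 2 / 2 ≤ a * β * r := by
        rw [ha, div_mul_eq_mul_div, div_mul_eq_mul_div, div_le_div_iff₀ (by norm_num) hDpos]
        have hfac : (0:ℝ) ≤ β * k * r ^ 2 * (r ^ 2 - 1) :=
          mul_nonneg (by positivity) (by nlinarith)
        nlinarith [hfac]
      nlinarith [mul_pos (mul_pos hapos hβ) hr0, h4, h1]
    linarith
end
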